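/- Let R be a finite group and φ an automorphism of R of odd prime order p. Let ι : R → R be the inversion map, and suppose R is abelian of exponent greater than 2 so that H = ⟨ι, φ⟩ is a cyclic group of order 2p acting on R. Then the number of orbits of H on R is at most (|R| + |I(R)|)/2 − |R|·(p−1)/(4p), where I(R) = {x : x² = 1}. -/

import Mathlib

open MulAction Subgroup Finset

-- aux sum lemma
lemma aux_sum_even_odd (A B : ℚ) (n : ℕ) :
    ∑ k ∈ Finset.range (2 * n), (if Even k then A else B) = n * A + n * B := by
  induction n with
  | zero => simp
  | succ n ih =>
    have h : 2 * (n + 1) = (2 * n + 1) + 1 := by ring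
    rw [h, Finset.sum_range_succ, Finset.sum_range_succ, ih]
    have h1 : ¬ Even (2 * n + 1) := by simp [Nat.even_add_one]
    have h2 : Even (2 * n) := even_two_mul n
    rw [if_neg h1, if_pos h2]
    push_cast; ring

lemma aux_fix_pow {R : Type*} (σ : Equiv.Perm R) (n : ℕ) (x : R) (h : σ x = x) :
    (σ ^ n) x = x := by
  induction n with
  | zero => simp
  | succ n ih => rw [pow_succ, Equiv.Perm.mul_apply, h, ih]

/-- For a finite abelian group `R` of exponent greater than 2 and an automorphism `φ`
of odd prime order `p`, the number of orbits of `H = ⟨ι, φ⟩ ≤ Sym(R)` on `R` is at most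
`(|R| + |I(R)|)/2 − |R|(p−1)/(4p)`. -/
theorem orbit_count_odd_prime (R : Type*) [CommGroup R] [Fintype R]
    (hexp : 2 < Monoid.exponent R) (p : ℕ) (hp : p.Prime) (hodd : Odd p)
    (φ : MulAut R) (hφ : orderOf φ = p)
    (H : Subgroup (Equiv.Perm R))
    (hH : H = Subgroup.closure {Equiv.inv R, MulEquiv.toEquiv (φ : R ≃* R)}) :
    (Nat.card (MulAction.orbitRel.Quotient H R) : ℚ) ≤
      ((Fintype.card R : ℚ) + (Nat.card {x : R // x ^ 2 = 1} : ℚ)) / 2 -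
        (Fintype.card R : ℚ) * ((p : ℚ) - 1) / (4 * p) := by
  classical
  haveI := Fact.mk hp
  set ι : Equiv.Perm R := Equiv.inv R with hι
  set b : Equiv.Perm R := MulEquiv.toEquiv (φ : R ≃* R) with hb
  -- basic applications
  have hbap : ∀ (n : ℕ) (x : R), (b ^ n) x = (φ ^ n) x := by
    intro n x
    have : b ^ n = MulAut.toPerm R (φ ^ n) := by rw [map_pow]; rfl
    rw [this]; rfl
  have hbinv : ∀ (n : ℕ) (x : R), (b ^ n) x⁻¹ = ((b ^ n) x)⁻¹ := by
    intro n x; rw [hbap, hbap]; exact map_inv (φ ^ n) x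
  have hcomm : Commute ι b := by
    ext x
    simp only [Equiv.Perm.mul_apply, hι, hb, Equiv.inv_apply]
    exact (map_inv φ x).symm
  have hι2 : ι ^ 2 = 1 := by
    ext x; simp [sq, Equiv.Perm.mul_apply, hι]
  have hιne : ι ≠ 1 := by
    intro h
    have : ∀ x : R, x ^ 2 = 1 := by
      intro x
      have := congrFun (congrArg (fun (e : Equiv.Perm R) => e.toFun) h) x
      simp only [hι, Equiv.inv_apply] at this
      have hx : x⁻¹ = x := this
      rw [sq]
      nth_rewrite 2 [← hx]
      exact mul_inv_cancel x
    have : Monoid.exponent R ∣ 2 := Monoid.exponent_dvd_of_forall_pow_eq_one this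
    have := Nat.le_of_dvd (by norm_num) this
    omega
  have hιord : orderOf ι = 2 := orderOf_eq_prime hι2 hιne
  have hbord : orderOf b = p := by
    rw [← hφ]
    have hinj : Function.Injective (MulAut.toPerm (M := R)) := fun a b h => by
      ext x; exact congrFun (congrArg (fun (e : Equiv.Perm R) => e.toFun) h) x
    exact orderOf_injective (MulAut.toPerm R) hinj φ
  set c : Equiv.Perm R := ι * b with hc
  have hcop : Nat.Coprime 2 p := by
    rw [Nat.coprime_primes Nat.prime_two hp]
    rintro rfl; exact (Nat.not_odd_iff_even.mpr even_two) hodd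
  have hcord : orderOf c = 2 * p := by
    rw [hc, hcomm.orderOf_mul_eq_mul_orderOf_of_coprime (by rw [hιord, hbord]; exact hcop),
      hιord, hbord]
  have hppos : 0 < p := hp.pos
  -- powers of ι
  have hιpow_even : ∀ k : ℕ, Even k → ι ^ k = 1 := by
    rintro k ⟨r, rfl⟩
    have : r + r = 2 * r := by ring
    rw [this, pow_mul, hι2, one_pow]
  have hιpow_odd : ∀ k : ℕ, Odd k → ι ^ k = ι := by
    rintro k ⟨r, rfl⟩
    rw [pow_add, pow_mul, hι2, one_pow, one_mul, pow_one]
  -- H = zpowers c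
  have hHz : H = Subgroup.zpowers c := by
    rw [hH]
    apply le_antisymm
    · rw [Subgroup.closure_le]
      rintro x (rfl | rfl)
      · refine ⟨(p : ℤ), ?_⟩
        show c ^ ((p : ℕ) : ℤ) = ι
        rw [zpow_natCast, hc, hcomm.mul_pow, hιpow_odd p hodd, ← hbord,
          pow_orderOf_eq_one, mul_one]
      · refine ⟨((p + 1 : ℕ) : ℤ), ?_⟩
        show c ^ (((p + 1 : ℕ)) : ℤ) = b
        rw [zpow_natCast, hc, hcomm.mul_pow, hιpow_even (p + 1) (by exact hodd.add_one),
          one_mul, ← hbord, pow_succ, pow_orderOf_eq_one, one_mul]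
    · rw [Subgroup.zpowers_le]
      exact Subgroup.mul_mem _ (Subgroup.subset_closure (by left; rfl))
        (Subgroup.subset_closure (by right; rfl))
  subst hHz
  -- fixed subgroup of φ
  set Cg : Subgroup R := MonoidHom.ker ((φ : R ≃* R).toMonoidHom / MonoidHom.id R) with hCg
  have hCmem : ∀ x : R, x ∈ Cg ↔ φ x = x := by
    intro x
    rw [hCg, MonoidHom.mem_ker]
    constructor
    · intro h
      have : φ x / x = 1 := h
      exact div_eq_one.mp this
    · intro h
      show φ x / x = 1
      rw [h, div_self']
  have hCne : Cg ≠ ⊤ := by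
    intro h
    have : φ = 1 := by
      ext x
      exact (hCmem x).mp (h ▸ Subgroup.mem_top x)
    rw [this] at hφ
    simp at hφ
    have := hp.one_lt
    omega
  have hCle : 2 * Nat.card Cg ≤ Fintype.card R := by
    have h1 := Subgroup.card_mul_index Cg
    have h2 : Cg.index ≠ 1 := fun h => hCne (Subgroup.index_eq_one.mp h)
    have h3 : Cg.index ≠ 0 := Subgroup.index_ne_zero_of_finite
    have h4 : 2 ≤ Cg.index := by omega
    calc 2 * Nat.card Cg ≤ Cg.index * Nat.card Cg := Nat.mul_le_mul_right _ h4
      _ = Nat.card R := by rw [mul_comm]; exact h1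
      _ = Fintype.card R := Nat.card_eq_fintype_card
  -- key: if ¬ p ∣ n and b^n fixes x then φ fixes x
  have hfixb : ∀ (n : ℕ) (x : R), ¬ (p ∣ n) → (b ^ n) x = x → φ x = x := by
    intro n x hpn hx
    have hcp : Nat.Coprime n p := (Nat.coprime_comm.mp ((Nat.Prime.coprime_iff_not_dvd hp).mpr hpn))
    have hne : (n : ZMod p) ≠ 0 := by
      rw [Ne, ZMod.natCast_eq_zero_iff]
      exact fun h => hpn h
    set m : ℕ := ((n : ZMod p)⁻¹).val with hm
    have hmod : n * m ≡ 1 [MOD p] := by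
      have : ((n * m : ℕ) : ZMod p) = ((1 : ℕ) : ZMod p) := by
        push_cast [hm]
        rw [ZMod.natCast_val, ZMod.cast_id]
        exact mul_inv_cancel₀ hne
      exact (ZMod.natCast_eq_natCast_iff _ _ _).mp this
    have hb1 : b ^ (n * m) = b := by
      have h1 : b ^ (n * m) = b ^ 1 := by
        rw [pow_eq_pow_iff_modEq, hbord]
        simpa using hmod
      simpa using h1
    have : (b ^ (n * m)) x = x := by
      rw [pow_mul]
      exact aux_fix_pow (b ^ n) m x hx
    rw [hb1] at this
    exact this
  have hpne2 : ¬ (p ∣ 2) := by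
    intro h
    have h1 := Nat.le_of_dvd (by norm_num) h
    have h2 := hp.two_le
    have h3 : p = 2 := by omega
    rw [h3] at hodd
    exact (by decide : ¬ Odd 2) hodd
  -- Burnside
  haveI : Fintype ↥(zpowers c) := Fintype.ofFinite _
  haveI instF : ∀ a : ↥(zpowers c), Fintype (MulAction.fixedBy R a) := fun a => Fintype.ofFinite _
  haveI : Fintype (Quotient (MulAction.orbitRel ↥(zpowers c) R)) := Fintype.ofFinite _
  have burnside := MulAction.sum_card_fixedBy_eq_card_orbits_mul_card_group (↥(zpowers c)) R
  have hcardH : Fintype.card ↥(zpowers c) = 2 * p := by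
    rw [← Nat.card_eq_fintype_card, Nat.card_zpowers, hcord]
  have hfin : IsOfFinOrder c := isOfFinOrder_of_finite c
  set e : Fin (2 * p) ≃ ↥(zpowers c) := (finCongr hcord.symm).trans (finEquivZPowers hfin)
    with he
  have heval : ∀ k : Fin (2 * p), ((e k : Equiv.Perm R)) = c ^ (k : ℕ) := by
    intro k
    rw [he]
    show ((finEquivZPowers hfin) (Fin.cast hcord.symm k) : Equiv.Perm R) = c ^ (k : ℕ)
    rw [finEquivZPowers_apply]
    show c ^ ((Fin.cast hcord.symm k : Fin (orderOf c)) : ℕ) = c ^ (k : ℕ)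
    rw [Fin.coe_cast]
  have hsum : ∑ g : ↥(zpowers c), Fintype.card (MulAction.fixedBy R g)
      = ∑ k : Fin (2 * p), Fintype.card (MulAction.fixedBy R (e k)) :=
    (Equiv.sum_comp e _).symm
  have hfixset : ∀ k : Fin (2 * p),
      MulAction.fixedBy R (e k) = {x : R | (c ^ (k : ℕ)) x = x} := by
    intro k
    ext x
    simp only [MulAction.mem_fixedBy, Set.mem_setOf_eq, Subgroup.mk_smul]
    rw [show (e k) • x = ((e k : Equiv.Perm R)) x from rfl, heval k]
  -- cardinality facts
  have hmono : ∀ S T : Set R, S ⊆ T → Nat.card S ≤ Nat.card T := fun S T h =>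
    Nat.card_le_card_of_injective (Set.inclusion h) (Set.inclusion_injective h)
  have hsetle : ∀ S : Set R, Nat.card S ≤ Fintype.card R := fun S => by
    rw [← Nat.card_eq_fintype_card]
    exact Nat.card_le_card_of_injective (Subtype.val) Subtype.val_injective
  -- the bound function
  set A : ℚ := (Fintype.card R : ℚ) / 2 with hA
  set B : ℚ := (Nat.card {x : R // x ^ 2 = 1} : ℚ) with hB
  set gb : ℕ → ℚ := fun k => (if Even k then A else B) + (if k = 0 then A else 0) with hgb
  have hbound : ∀ k : Fin (2 * p),
      (Fintype.card (MulAction.fixedBy R (e k)) : ℚ) ≤ gb (k : ℕ) := by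
    intro k
    have hkcard : (Fintype.card (MulAction.fixedBy R (e k)) : ℕ)
        = Nat.card {x : R | (c ^ (k : ℕ)) x = x} := by
      rw [← Nat.card_eq_fintype_card, hfixset k]
    rw [hkcard]
    rcases Nat.even_or_odd (k : ℕ) with hev | hod
    · -- even case
      rcases Nat.eq_zero_or_pos (k : ℕ) with hk0 | hkpos
      · -- k = 0
        rw [hgb]
        simp only [hk0, if_pos (Even.zero), if_pos rfl]
        calc (Nat.card {x : R | (c ^ (0:ℕ)) x = x} : ℚ) ≤ (Fintype.card R : ℚ) := by
              exact_mod_cast hsetle _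
          _ = A + A := by rw [hA]; ring
      · -- k even, nonzero
        have hknd : ¬ (p ∣ (k : ℕ)) := by
          intro hd
          obtain ⟨t, ht⟩ := hd
          have hklt : (k : ℕ) < 2 * p := k.isLt
          rw [ht] at hklt
          have htlt : t < 2 := by
            by_contra hcon
            push_neg at hcon
            have : p * 2 ≤ p * t := Nat.mul_le_mul_left p hcon
            omega
          have htnz : t ≠ 0 := by
            intro h0
            rw [h0, mul_zero] at ht
            omega
          have ht1 : t = 1 := by omega
          rw [ht1, mul_one] at ht
          rw [ht] at hev
          exact (Nat.not_even_iff_odd.mpr hodd) hev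
        have hck : c ^ (k : ℕ) = b ^ (k : ℕ) := by
          rw [hc, hcomm.mul_pow, hιpow_even _ hev, one_mul]
        have hsub : {x : R | (c ^ (k : ℕ)) x = x} ⊆ (Cg : Set R) := by
          intro x hx
          rw [Set.mem_setOf_eq, hck] at hx
          exact (hCmem x).mpr (hfixb (k : ℕ) x hknd hx)
        have h1 : Nat.card {x : R | (c ^ (k : ℕ)) x = x} ≤ Nat.card ↥Cg := by
          have := hmono _ _ hsub
          simpa using this
        have h2 : (Nat.card ↥Cg : ℚ) ≤ A := by
          rw [hA]
          have : (2 * Nat.card ↥Cg : ℚ) ≤ (Fintype.card R : ℚ) := by exact_mod_cast hCle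
          linarith
        rw [hgb]
        simp only [if_pos hev, if_neg (Nat.pos_iff_ne_zero.mp hkpos), add_zero]
        calc (Nat.card {x : R | (c ^ (k : ℕ)) x = x} : ℚ) ≤ (Nat.card ↥Cg : ℚ) := by
              exact_mod_cast h1
          _ ≤ A := h2
    · -- odd case
      have hknz : (k : ℕ) ≠ 0 := by
        intro h; rw [h] at hod; exact (Nat.not_odd_iff_even.mpr Even.zero) hod
      have hck : c ^ (k : ℕ) = ι * b ^ (k : ℕ) := by
        rw [hc, hcomm.mul_pow, hιpow_odd _ hod]
      have hsub : {x : R | (c ^ (k : ℕ)) x = x} ⊆ {x : R | x ^ 2 = 1} := by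
        intro x hx
        rw [Set.mem_setOf_eq, hck, Equiv.Perm.mul_apply] at hx
        have hxi : ((b ^ (k : ℕ)) x)⁻¹ = x := hx
        have hxinv : (b ^ (k : ℕ)) x = x⁻¹ := inv_eq_iff_eq_inv.mp hxi
        have hxeq : x⁻¹ = x := by
          rcases Classical.em (p ∣ (k : ℕ)) with hd | hnd
          · have hb1 : b ^ (k : ℕ) = 1 := by
              refine orderOf_dvd_iff_pow_eq_one.mp ?_
              rw [hbord]
              exact hd
            rw [hb1] at hxinv
            exact hxinv.symm
          · have h2k : (b ^ (2 * (k : ℕ))) x = x := by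
              have : b ^ (2 * (k : ℕ)) = (b ^ (k : ℕ)) * (b ^ (k : ℕ)) := by
                rw [← pow_add]; ring_nf
              rw [this, Equiv.Perm.mul_apply, hxinv, hbinv, hxinv, inv_inv]
            have hnd2 : ¬ (p ∣ 2 * (k : ℕ)) := by
              intro hd
              rcases (Nat.Prime.dvd_mul hp).mp hd with h | h
              · exact hpne2 h
              · exact hnd h
            have hφx : φ x = x := hfixb _ x hnd2 h2k
            have hbx : b x = x := hφx
            have : (b ^ (k : ℕ)) x = x := aux_fix_pow b (k : ℕ) x hbx
            rw [this] at hxinv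
            exact hxinv.symm
        rw [Set.mem_setOf_eq, sq]
        nth_rewrite 2 [← hxeq]
        exact mul_inv_cancel x
      have h1 : Nat.card {x : R | (c ^ (k : ℕ)) x = x} ≤ Nat.card {x : R | x ^ 2 = 1} :=
        hmono _ _ hsub
      have h2 : Nat.card {x : R | x ^ 2 = 1} = Nat.card {x : R // x ^ 2 = 1} := rfl
      rw [hgb]
      simp only [if_neg (Nat.not_even_iff_odd.mpr hod), if_neg hknz, add_zero]
      rw [hB]
      exact_mod_cast h2 ▸ h1
  -- assemble
  have hNcard : (Nat.card (MulAction.orbitRel.Quotient (↥(zpowers c)) R) : ℚ) * (2 * p)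
      = ∑ k : Fin (2 * p), (Fintype.card (MulAction.fixedBy R (e k)) : ℚ) := by
    have hN : Nat.card (MulAction.orbitRel.Quotient (↥(zpowers c)) R)
        = Fintype.card (Quotient (MulAction.orbitRel ↥(zpowers c) R)) :=
      Nat.card_eq_fintype_card
    rw [hN]
    have hb2 : (∑ k : Fin (2 * p), Fintype.card (MulAction.fixedBy R (e k)))
        = Fintype.card (Quotient (MulAction.orbitRel ↥(zpowers c) R)) * (2 * p) := by
      rw [← hsum, burnside, hcardH]
    calc (Fintype.card (Quotient (MulAction.orbitRel ↥(zpowers c) R)) : ℚ) * (2 * p)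
        = ((Fintype.card (Quotient (MulAction.orbitRel ↥(zpowers c) R)) * (2 * p) : ℕ) : ℚ) := by
          push_cast; ring
      _ = ((∑ k : Fin (2 * p), Fintype.card (MulAction.fixedBy R (e k)) : ℕ) : ℚ) := by
          rw [hb2]
      _ = ∑ k : Fin (2 * p), (Fintype.card (MulAction.fixedBy R (e k)) : ℚ) := by
          push_cast; rfl
  have htotal : (∑ k : Fin (2 * p), (Fintype.card (MulAction.fixedBy R (e k)) : ℚ))
      ≤ (p : ℚ) * A + (p : ℚ) * B + A := by
    calc (∑ k : Fin (2 * p), (Fintype.card (MulAction.fixedBy R (e k)) : ℚ))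
        ≤ ∑ k : Fin (2 * p), gb (k : ℕ) := Finset.sum_le_sum (fun k _ => hbound k)
      _ = ∑ k ∈ Finset.range (2 * p), gb k := Fin.sum_univ_eq_sum_range gb (2 * p)
      _ = (p : ℚ) * A + (p : ℚ) * B + A := by
          rw [hgb]
          rw [Finset.sum_add_distrib, aux_sum_even_odd A B p]
          have : ∑ k ∈ Finset.range (2 * p), (if k = 0 then A else 0) = A := by
            rw [Finset.sum_ite_eq' (Finset.range (2 * p)) 0 (fun _ => A)]
            rw [if_pos (Finset.mem_range.mpr (by positivity : 0 < 2 * p))]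
          rw [this]
  have h2p : (0 : ℚ) < 2 * (p : ℚ) := by positivity
  have hfinal : ((Fintype.card R : ℚ) + (Nat.card {x : R // x ^ 2 = 1} : ℚ)) / 2 -
        (Fintype.card R : ℚ) * ((p : ℚ) - 1) / (4 * p) = ((p : ℚ) * A + (p : ℚ) * B + A) / (2 * p) := by
    have hpq : ((p : ℚ)) ≠ 0 := Nat.cast_ne_zero.mpr hppos.ne'
    have hp0 : p ≠ 0 := hppos.ne'
    rw [hA, hB]
    field_simp
    all_goals first
      | ring
      | (intro h; exact absurd h hp0)
  rw [hfinal, le_div_iff₀ h2p]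
  calc (Nat.card (MulAction.orbitRel.Quotient (↥(zpowers c)) R) : ℚ) * (2 * (p:ℚ))
      = ∑ k : Fin (2 * p), (Fintype.card (MulAction.fixedBy R (e k)) : ℚ) := hNcard
    _ ≤ (p : ℚ) * A + (p : ℚ) * B + A := htotal
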